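/- Let κ ∈ ℂ and c > 0, and let (r_n)_{n≥1} be a sequence of positive real numbers with r_n → ∞ and r_{n+1} ≤ exp(r_n) + c for all n. Then there exist a point z ∈ I(E_κ) and n₀ ∈ ℕ such that |Re(E_κ^{n−1}(z)) − r_n| ≤ 2 + 2π for all n ≥ n₀. -/

import Mathlib

open Filter Topology ENNReal

noncomputable section

/-- The space of external addresses: integer sequences (indexed from 0, so index `k`
corresponds to the entry `s_{k+1}` of the paper) with the lexicographic order. -/
abbrev Addr : Type := Lex (ℕ → ℤ)

/-- The shift map `σ` on external addresses. -/
def shiftA (s : Addr) : Addr := toLex (fun n => ofLex s (n + 1))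

/-- The model growth function `F(t) = e^t - 1`. -/
def Fexp (t : ℝ) : ℝ := Real.exp t - 1

/-- The model map `𝓕(s,t) = (σ s, F t - 2π |s₂|)`. -/
def Fmod (p : Addr × ℝ) : Addr × ℝ :=
  (shiftA p.1, Fexp p.2 - 2 * Real.pi * |((ofLex p.1 1 : ℤ) : ℝ)|)

/-- The model set `X̄ = {(s,t) : T(𝓕ⁿ(s,t)) ≥ 0 for all n ≥ 0}`. -/
def Xbar : Set (Addr × ℝ) := {p | ∀ n : ℕ, 0 ≤ (Fmod^[n] p).2}

/-- The model escaping set `X = {(s,t) ∈ X̄ : T(𝓕ⁿ(s,t)) → ∞}`. -/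
def Xset : Set (Addr × ℝ) :=
  {p | p ∈ Xbar ∧ Tendsto (fun n : ℕ => (Fmod^[n] p).2) atTop atTop}

/-- The minimal potential `t_s ∈ [0,∞]` of an address (`∞` if `(s,t) ∉ X̄` for all `t ≥ 0`). -/
def tS (s : Addr) : ℝ≥0∞ :=
  sInf (ENNReal.ofReal '' {t : ℝ | 0 ≤ t ∧ (s, t) ∈ Xbar})

/-- The exponential map `E_κ(z) = e^z + κ`. -/
def Eexp (κ : ℂ) (z : ℂ) : ℂ := Complex.exp z + κ

/-- The escaping set `I(E_κ)`. -/
def escapingSet (κ : ℂ) : Set ℂ :=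
  {z | Tendsto (fun n : ℕ => ‖(Eexp κ)^[n] z‖) atTop atTop}

/-- The order topology induced by the lexicographic order on external addresses. -/
instance : TopologicalSpace Addr := Preorder.topology Addr
instance : OrderTopology Addr := ⟨rfl⟩

noncomputable def pullTo (κ : ℂ) (y : ℝ) (v : ℂ) : ℂ :=
  (Real.log (‖v - κ‖) : ℂ) +
    ((Complex.arg (v - κ) + 2 * Real.pi *
      (round ((y - Complex.arg (v - κ)) / (2 * Real.pi)) : ℤ) : ℝ) : ℂ) * Complex.I

lemma pullTo_re (κ : ℂ) (y : ℝ) (v : ℂ) :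
    (pullTo κ y v).re = Real.log (‖v - κ‖) := by
  simp [pullTo]

lemma pullTo_im_sub (κ : ℂ) (y : ℝ) (v : ℂ) : |(pullTo κ y v).im - y| ≤ Real.pi := by
  have him : (pullTo κ y v).im = Complex.arg (v - κ) + 2 * Real.pi *
      (round ((y - Complex.arg (v - κ)) / (2 * Real.pi)) : ℤ) := by
    simp [pullTo]
  set θ := Complex.arg (v - κ) with hθ
  set u := (y - θ) / (2 * Real.pi) with hu
  have h2π : (0:ℝ) < 2 * Real.pi := by positivity
  have hkey : (pullTo κ y v).im - y = -(2 * Real.pi) * (u - (round u : ℤ)) := by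
    rw [him, hu]; field_simp; ring
  rw [hkey, abs_mul, abs_neg, abs_of_pos h2π]
  have h1 : |u - (round u : ℤ)| ≤ 1/2 := abs_sub_round u
  nlinarith [Real.pi_pos]

lemma Eexp_pullTo (κ : ℂ) (y : ℝ) (v : ℂ) (hv : v ≠ κ) : Eexp κ (pullTo κ y v) = v := by
  have hu : v - κ ≠ 0 := sub_ne_zero.mpr hv
  have habs : (0:ℝ) < ‖v - κ‖ := norm_pos_iff.mpr hu
  unfold Eexp pullTo
  rw [Complex.exp_add]
  have h1 : Complex.exp ((Real.log (‖v - κ‖) : ℂ)) =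
      ((‖v - κ‖ : ℝ) : ℂ) := by
    rw [← Complex.ofReal_exp, Real.exp_log habs]
  have h2 : Complex.exp (((Complex.arg (v - κ) + 2 * Real.pi *
      (round ((y - Complex.arg (v - κ)) / (2 * Real.pi)) : ℤ) : ℝ) : ℂ) * Complex.I) =
      Complex.exp ((Complex.arg (v - κ)) * Complex.I) := by
    push_cast
    rw [add_mul, Complex.exp_add]
    have h4 : Complex.exp ((round ((y - Complex.arg (v - κ)) / (2 * Real.pi)) : ℤ) *
        (2 * (Real.pi : ℂ) * Complex.I)) = 1 :=
      Complex.exp_int_mul_two_pi_mul_I _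
    rw [show (2 * (Real.pi:ℂ) * (round ((y - Complex.arg (v - κ)) / (2 * Real.pi)) : ℤ)) * Complex.I
        = (round ((y - Complex.arg (v - κ)) / (2 * Real.pi)) : ℤ) * (2 * (Real.pi:ℂ) * Complex.I) by ring,
      h4, mul_one]
  rw [h1, h2, Complex.norm_mul_exp_arg_mul_I, sub_add_cancel]

noncomputable def wpt (c : ℝ) (r : ℕ → ℝ) (n : ℕ) : ℂ :=
  ⟨r n, Real.sqrt ((Real.exp (r (n - 1)) + c)^2 - (r n)^2)⟩

lemma wpt_re (c : ℝ) (r : ℕ → ℝ) (n : ℕ) : (wpt c r n).re = r n := rfl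

lemma wpt_abs (c : ℝ) (r : ℕ → ℝ) (n : ℕ) (h0 : 0 ≤ r n)
    (h1 : r n ≤ Real.exp (r (n - 1)) + c) (hc : 0 < c) :
    ‖wpt c r n‖ = Real.exp (r (n - 1)) + c := by
  set ρ := Real.exp (r (n - 1)) + c with hρ
  have hρ0 : 0 < ρ := by positivity
  have hsq : (r n)^2 ≤ ρ^2 := by nlinarith
  have him : (wpt c r n).im ^ 2 = ρ^2 - (r n)^2 := by
    show (Real.sqrt (ρ^2 - (r n)^2))^2 = ρ^2 - (r n)^2
    exact Real.sq_sqrt (by linarith)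
  have : ‖wpt c r n‖ = Real.sqrt ((r n)^2 + (ρ^2 - (r n)^2)) := by
    rw [Complex.norm_def, Complex.normSq_mk]
    congr 1
    have hre : (wpt c r n).re = r n := rfl
    nlinarith [him]
  rw [this]
  have : (r n)^2 + (ρ^2 - (r n)^2) = ρ^2 := by ring
  rw [this, Real.sqrt_sq hρ0.le]

noncomputable def zb (κ : ℂ) (c : ℝ) (r : ℕ → ℝ) (n₀ N : ℕ) : ℕ → ℂ
  | 0 => wpt c r (N + n₀)
  | (j+1) => pullTo κ (wpt c r (N + n₀ - (j+1))).im (zb κ c r n₀ N j)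

/-- **Arbitrary escape speed**: for any admissible sequence `(r_n)` of positive reals with
`r_n → ∞` and `r_{n+1} ≤ exp(r_n) + c`, there is an escaping point of `E_κ` whose orbit's
real parts follow `(r_n)` up to an error of `2 + 2π`. -/
theorem exp_arbitrary_escape_speed (κ : ℂ) (c : ℝ) (hc : 0 < c) (r : ℕ → ℝ)
    (hpos : ∀ n : ℕ, 1 ≤ n → 0 < r n)
    (hlim : Tendsto r atTop atTop)
    (hrec : ∀ n : ℕ, 1 ≤ n → r (n + 1) ≤ Real.exp (r n) + c) :
    ∃ z ∈ escapingSet κ, ∃ n₀ : ℕ, 1 ≤ n₀ ∧ ∀ n : ℕ, n₀ ≤ n →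
      |((Eexp κ)^[n - 1] z).re - r n| ≤ 2 + 2 * Real.pi := by
  classical
  have hπ := Real.pi_pos
  set K := ‖κ‖ with hK
  have hK0 : 0 ≤ K := norm_nonneg _
  set D := Real.pi + 1 with hD
  have hD0 : 0 ≤ D := by positivity
  set M := Real.pi + 1 + K + c with hM
  have hM0 : 0 < M := by positivity
  set R := Real.log (2*M) + M with hR
  have hexpR : Real.exp R = 2*M*Real.exp M := by
    rw [hR, Real.exp_add, Real.exp_log (by positivity)]
  have h2M : ∀ t : ℝ, R ≤ t → 2*M ≤ Real.exp t := by
    intro t ht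
    have h1 : (1:ℝ) ≤ Real.exp M := Real.one_le_exp hM0.le
    have h2 : Real.exp R ≤ Real.exp t := Real.exp_le_exp.mpr ht
    nlinarith
  obtain ⟨m₀, hm₀⟩ := Filter.eventually_atTop.mp (hlim.eventually_ge_atTop R)
  set n₀ := m₀ + 2 with hn₀
  have hrR : ∀ n, n₀ - 1 ≤ n → R ≤ r n := fun n hn => hm₀ n (by omega)
  -- key pointwise estimate for one pull-back step
  have hstep : ∀ n, n₀ - 1 ≤ n → ∀ v : ℂ,
      ‖v - wpt c r (n+1)‖ ≤ D →
      v ≠ κ ∧ |Real.log (‖v - κ‖) - r n| ≤ 1 := by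
    intro n hn v hv
    have hn1 : 1 ≤ n := by omega
    have hA : 2*M ≤ Real.exp (r n) := h2M _ (hrR n hn)
    set A := Real.exp (r n) with hA'
    have hA0 : 0 < A := Real.exp_pos _
    have hw : ‖wpt c r (n+1)‖ = A + c := by
      have h := wpt_abs c r (n+1) (hpos (n+1) (by omega)).le (by simpa using hrec n hn1) hc
      simpa using h
    set w := wpt c r (n+1) with hwdef
    -- upper bound
    have hub : ‖v - κ‖ ≤ A + M := by
      have t1 : ‖v - κ‖ ≤ ‖v - w‖ + ‖w - κ‖ :=
        norm_sub_le_norm_sub_add_norm_sub v w κ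
      have t2 : ‖w - κ‖ ≤ ‖w‖ + K := by
        simpa [sub_eq_add_neg] using norm_add_le w (-κ)
      rw [hw] at t2
      rw [hM]; rw [hD] at hv; linarith
    -- lower bound
    have hlb : A/2 ≤ ‖v - κ‖ := by
      have e : w = (w - v) + (v - κ) + κ := by ring
      have t1 : ‖w‖ ≤ ‖(w - v) + (v - κ)‖ + K := by
        calc ‖w‖ = ‖(w - v) + (v - κ) + κ‖ := by rw [← e]
          _ ≤ ‖(w - v) + (v - κ)‖ + K := norm_add_le _ _
      have t2 : ‖(w - v) + (v - κ)‖ ≤ ‖w - v‖ + ‖v - κ‖ :=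
        norm_add_le _ _
      have t3 : ‖w - v‖ = ‖v - w‖ := norm_sub_rev w v
      rw [hw] at t1
      rw [hM] at hA
      rw [hD] at hv
      rw [hM]  at *
      linarith
    have hpos' : (0:ℝ) < ‖v - κ‖ := lt_of_lt_of_le (by linarith) hlb
    have hne : v ≠ κ := sub_ne_zero.mp (norm_pos_iff.mp hpos')
    refine ⟨hne, ?_⟩
    have hlog2 : Real.log 2 ≤ 1 := by
      have := Real.log_le_sub_one_of_pos (by norm_num : (0:ℝ) < 2)
      linarith
    have hup : Real.log (‖v - κ‖) ≤ r n + Real.log 2 := by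
      have l1 : Real.log (‖v - κ‖) ≤ Real.log (2*A) := by
        apply Real.log_le_log hpos'
        nlinarith
      have l2 : Real.log (2*A) = Real.log 2 + r n := by
        rw [Real.log_mul (by norm_num) hA0.ne', hA', Real.log_exp]
      linarith
    have hdown : r n - Real.log 2 ≤ Real.log (‖v - κ‖) := by
      have l1 : Real.log (A/2) ≤ Real.log (‖v - κ‖) :=
        Real.log_le_log (by positivity) hlb
      have l2 : Real.log (A/2) = r n - Real.log 2 := by
        rw [Real.log_div hA0.ne' (by norm_num), hA', Real.log_exp]
      linarith
    rw [abs_le]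
    constructor <;> linarith
  -- the backward orbit tracks the targets
  have hkey : ∀ N j, j ≤ N →
      ‖zb κ c r n₀ N j - wpt c r (N + n₀ - j)‖ ≤ D := by
    intro N j
    induction j with
    | zero =>
      intro _
      simp [zb]
      positivity
    | succ j ih =>
      intro hj
      set n := N + n₀ - (j+1) with hn
      have hnn : N + n₀ - j = n + 1 := by omega
      have ih2 : ‖zb κ c r n₀ N j - wpt c r (n+1)‖ ≤ D := by
        rw [← hnn]; exact ih (by omega)
      obtain ⟨hne, hlog⟩ := hstep n (by omega) (zb κ c r n₀ N j) ih2
      have hz : zb κ c r n₀ N (j+1) = pullTo κ (wpt c r n).im (zb κ c r n₀ N j) := by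
        rw [zb]
      rw [hz]
      refine le_trans (Complex.norm_le_abs_re_add_abs_im _) ?_
      have hre : (pullTo κ (wpt c r n).im (zb κ c r n₀ N j) - wpt c r n).re
          = Real.log (‖zb κ c r n₀ N j - κ‖) - r n := by
        rw [Complex.sub_re, pullTo_re, wpt_re]
      have him : (pullTo κ (wpt c r n).im (zb κ c r n₀ N j) - wpt c r n).im
          = (pullTo κ (wpt c r n).im (zb κ c r n₀ N j)).im - (wpt c r n).im := by
        rw [Complex.sub_im]
      rw [hre, him, hD]
      have := pullTo_im_sub κ (wpt c r n).im (zb κ c r n₀ N j)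
      linarith
  -- orbit relation for the backward orbit
  have hEzb : ∀ N j, j + 1 ≤ N → Eexp κ (zb κ c r n₀ N (j+1)) = zb κ c r n₀ N j := by
    intro N j hj
    set n := N + n₀ - (j+1) with hn
    have hnn : N + n₀ - j = n + 1 := by omega
    have ih2 : ‖zb κ c r n₀ N j - wpt c r (n+1)‖ ≤ D := by
      rw [← hnn]; exact hkey N j (by omega)
    have hne : zb κ c r n₀ N j ≠ κ := (hstep n (by omega) _ ih2).1
    have hz : zb κ c r n₀ N (j+1) = pullTo κ (wpt c r n).im (zb κ c r n₀ N j) := by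
      rw [zb]
    rw [hz, Eexp_pullTo κ _ _ hne]
  have hiter : ∀ N k, k ≤ N →
      (Eexp κ)^[k] (zb κ c r n₀ N N) = zb κ c r n₀ N (N - k) := by
    intro N k
    induction k with
    | zero => intro _; simp
    | succ k ih =>
      intro hk
      rw [Function.iterate_succ_apply', ih (by omega)]
      have h1 : N - k = (N - (k+1)) + 1 := by omega
      rw [h1, hEzb N (N - (k+1)) (by omega)]
  -- compactness: extract a limit point
  set ζ : ℕ → ℂ := fun N => zb κ c r n₀ N N with hζ
  have hζmem : ∀ N, ζ N ∈ Metric.closedBall (wpt c r n₀) D := by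
    intro N
    rw [Metric.mem_closedBall, Complex.dist_eq]
    have h := hkey N N le_rfl
    have h2 : N + n₀ - N = n₀ := by omega
    rw [h2] at h
    exact h
  obtain ⟨zs, _, φ, hφ, htend⟩ :=
    (isCompact_closedBall (wpt c r n₀) D).tendsto_subseq hζmem
  have hEc : Continuous (Eexp κ) := by
    unfold Eexp; exact Complex.continuous_exp.add continuous_const
  have htrack : ∀ k, ‖(Eexp κ)^[k] zs - wpt c r (n₀ + k)‖ ≤ D := by
    intro k
    have h1 : Tendsto (fun j => (Eexp κ)^[k] (ζ (φ j))) atTop (𝓝 ((Eexp κ)^[k] zs)) :=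
      ((hEc.iterate k).tendsto zs).comp htend
    have h2 : ∀ᶠ j in atTop, (Eexp κ)^[k] (ζ (φ j)) ∈
        Metric.closedBall (wpt c r (n₀ + k)) D := by
      filter_upwards [eventually_ge_atTop k] with j hj
      have hjk : k ≤ φ j := le_trans hj hφ.le_apply
      rw [Metric.mem_closedBall, Complex.dist_eq]
      have h3 := hiter (φ j) k hjk
      have h4 := hkey (φ j) (φ j - k) (by omega)
      have h5 : φ j + n₀ - (φ j - k) = n₀ + k := by omega
      rw [h5] at h4
      show ‖(Eexp κ)^[k] (zb κ c r n₀ (φ j) (φ j)) - wpt c r (n₀ + k)‖ ≤ D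
      rw [h3]
      exact h4
    have := Metric.isClosed_closedBall.mem_of_tendsto h1 h2
    rw [Metric.mem_closedBall, Complex.dist_eq] at this
    exact this
  -- facts about the limit point
  have hzsne : zs ≠ κ := by
    have h0 := htrack 0
    simp only [Function.iterate_zero, id_eq, Nat.add_zero] at h0
    have h1 : n₀ = (n₀ - 1) + 1 := by omega
    refine (hstep (n₀ - 1) le_rfl zs ?_).1
    rw [← h1]
    exact h0
  -- pull the limit point back n₀ - 1 times
  set pdown : ℂ → ℂ := fun v => pullTo κ (κ.im + 4*Real.pi) v with hpdown
  have hpdne : ∀ v : ℂ, pdown v ≠ κ := by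
    intro v h
    have him := pullTo_im_sub κ (κ.im + 4*Real.pi) v
    have h2 : (pullTo κ (κ.im + 4*Real.pi) v).im = κ.im := by
      rw [show pullTo κ (κ.im + 4*Real.pi) v = κ from h]
    rw [h2] at him
    have h3 : κ.im - (κ.im + 4*Real.pi) = -(4*Real.pi) := by ring
    rw [h3, abs_neg, abs_of_pos (by positivity)] at him
    linarith
  have hchain : ∀ i : ℕ, pdown^[i] zs ≠ κ ∧ (Eexp κ)^[i] (pdown^[i] zs) = zs := by
    intro i
    induction i with
    | zero => exact ⟨hzsne, rfl⟩
    | succ i ih =>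
      have h1 : pdown^[i+1] zs = pdown (pdown^[i] zs) := Function.iterate_succ_apply' _ _ _
      constructor
      · rw [h1]; exact hpdne _
      · rw [h1, Function.iterate_succ_apply]
        have h2 : Eexp κ (pdown (pdown^[i] zs)) = pdown^[i] zs :=
          Eexp_pullTo κ _ _ ih.1
        rw [h2, ih.2]
  set z : ℂ := pdown^[n₀ - 1] zs with hz
  have hEz : (Eexp κ)^[n₀ - 1] z = zs := (hchain (n₀ - 1)).2
  have horbit : ∀ n, n₀ ≤ n → (Eexp κ)^[n - 1] z = (Eexp κ)^[n - n₀] zs := by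
    intro n hn
    have h : n - 1 = (n - n₀) + (n₀ - 1) := by omega
    rw [h, Function.iterate_add_apply, hEz]
  have hrebound : ∀ n, n₀ ≤ n → |((Eexp κ)^[n - 1] z).re - r n| ≤ D := by
    intro n hn
    rw [horbit n hn]
    have htr := htrack (n - n₀)
    have hnn : n₀ + (n - n₀) = n := by omega
    rw [hnn] at htr
    have h1 : ((Eexp κ)^[n - n₀] zs).re - r n
        = ((Eexp κ)^[n - n₀] zs - wpt c r n).re := by
      rw [Complex.sub_re, wpt_re]
    rw [h1]
    exact le_trans (Complex.abs_re_le_norm _) htr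
  refine ⟨z, ?_, n₀, by omega, ?_⟩
  · -- z is escaping
    show Tendsto (fun m : ℕ => ‖(Eexp κ)^[m] z‖) atTop atTop
    have ht : Tendsto (fun m : ℕ => r (m+1) - D) atTop atTop := by
      have h1 : Tendsto (fun m : ℕ => r (m+1)) atTop atTop :=
        hlim.comp (tendsto_add_atTop_nat 1)
      simpa [sub_eq_add_neg] using tendsto_atTop_add_const_right atTop (-D) h1
    apply tendsto_atTop_mono' atTop _ ht
    filter_upwards [eventually_ge_atTop (n₀ - 1)] with m hm
    have hm1 : n₀ ≤ m + 1 := by omega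
    have hb := hrebound (m+1) hm1
    have h2 : m + 1 - 1 = m := by omega
    rw [h2] at hb
    have h3 : r (m+1) - D ≤ ((Eexp κ)^[m] z).re := by
      rw [abs_le] at hb
      linarith [hb.1]
    exact le_trans h3 (Complex.re_le_norm _)
  · -- the real parts track r n
    intro n hn
    have := hrebound n hn
    rw [hD] at this
    linarith
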